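/- The chromatic number of the graph H_Δ is exactly 2Δ-2. -/

import Mathlib

/-- Vertices of `H_Δ` (with `n = Δ - 1`): `V0 ⊕ V1 ⊕ P ⊕ {†}`. -/
abbrev HVert (n : ℕ) := (Fin n ⊕ Fin n) ⊕ ((Fin n × Fin n) ⊕ Unit)

/-- One-directional adjacency relation generating `H_Δ`. -/
def HRel (n : ℕ) : HVert n → HVert n → Prop
  | Sum.inl (Sum.inl _), Sum.inl (Sum.inl _) => True
  | Sum.inl (Sum.inr _), Sum.inl (Sum.inr _) => True
  | Sum.inr (Sum.inl (i, j)), Sum.inr (Sum.inl (i', j')) => i ≠ i' ∧ j ≠ j'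
  | Sum.inr (Sum.inr _), Sum.inr (Sum.inl _) => True
  | Sum.inl (Sum.inl i), Sum.inr (Sum.inl (i', _)) => i' ≠ i
  | Sum.inl (Sum.inr j), Sum.inr (Sum.inl (_, j')) => j' ≠ j
  | _, _ => False

/-- The graph `H_Δ` with `n = Δ - 1`. -/
def HGraph (n : ℕ) : SimpleGraph (HVert n) := SimpleGraph.fromRel (HRel n)

section Aux

variable {n : ℕ}

lemma hadj_V0 {i i' : Fin n} (h : i ≠ i') :
    (HGraph n).Adj (.inl (.inl i)) (.inl (.inl i')) := by
  rw [HGraph, SimpleGraph.fromRel_adj]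
  exact ⟨by simpa using h, Or.inl trivial⟩

lemma hadj_V1 {j j' : Fin n} (h : j ≠ j') :
    (HGraph n).Adj (.inl (.inr j)) (.inl (.inr j')) := by
  rw [HGraph, SimpleGraph.fromRel_adj]
  exact ⟨by simpa using h, Or.inl trivial⟩

lemma hadj_V0P {i i' : Fin n} {j : Fin n} (h : i' ≠ i) :
    (HGraph n).Adj (.inl (.inl i)) (.inr (.inl (i', j))) := by
  rw [HGraph, SimpleGraph.fromRel_adj]
  exact ⟨by simp, Or.inl h⟩

lemma hadj_V1P {j j' : Fin n} {i : Fin n} (h : j' ≠ j) :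
    (HGraph n).Adj (.inl (.inr j)) (.inr (.inl (i, j'))) := by
  rw [HGraph, SimpleGraph.fromRel_adj]
  exact ⟨by simp, Or.inl h⟩

lemma hadj_PP {i i' j j' : Fin n} (h1 : i ≠ i') (h2 : j ≠ j') :
    (HGraph n).Adj (.inr (.inl (i, j))) (.inr (.inl (i', j'))) := by
  rw [HGraph, SimpleGraph.fromRel_adj]
  exact ⟨by simp [h1], Or.inl ⟨h1, h2⟩⟩

lemma hadj_dag (p : Fin n × Fin n) :
    (HGraph n).Adj (.inr (.inr ())) (.inr (.inl p)) := by
  rw [HGraph, SimpleGraph.fromRel_adj]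
  exact ⟨by simp, Or.inl trivial⟩

end Aux

lemma hcolorable {n : ℕ} (hn : 0 < n) : (HGraph n).Colorable (2 * n) := by
  have hcard : Fintype.card (Fin n ⊕ Fin n) = 2 * n := by simp; ring
  rw [← hcard]
  refine (SimpleGraph.Coloring.mk
    (fun v => match v with
      | .inl (.inl i) => Sum.inl i
      | .inl (.inr j) => Sum.inr j
      | .inr (.inl (i, _)) => Sum.inl i
      | .inr (.inr _) => Sum.inr ⟨0, hn⟩) ?_).colorable
  intro v w hadj
  rw [HGraph, SimpleGraph.fromRel_adj] at hadj
  obtain ⟨hne, hrel⟩ := hadj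
  rcases v with (i | j) | (⟨i, j⟩ | u) <;> rcases w with (i' | j') | (⟨i', j'⟩ | u') <;>
    simp_all [HRel] <;> tauto

open Finset in
lemma hnotcolorable {n : ℕ} (hn : 2 ≤ n) : ¬ (HGraph n).Colorable (2 * n - 1) := by
  classical
  rintro ⟨C⟩
  set κ := Fin (2 * n - 1) with hκ
  let α : Fin n → κ := fun i => C (.inl (.inl i))
  let β : Fin n → κ := fun j => C (.inl (.inr j))
  let c : Fin n × Fin n → κ := fun p => C (.inr (.inl p))
  let d : κ := C (.inr (.inr ()))
  have hα_inj : Function.Injective α := by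
    intro i i' h
    by_contra hne
    exact C.valid (hadj_V0 hne) h
  have hβ_inj : Function.Injective β := by
    intro j j' h
    by_contra hne
    exact C.valid (hadj_V1 hne) h
  have hL1a : ∀ (i j : Fin n) (i' : Fin n), i ≠ i' → c (i, j) ≠ α i' := by
    intro i j i' h hc
    exact C.valid (hadj_V0P (show i ≠ i' from h)) hc.symm
  have hL1b : ∀ (i j : Fin n) (j' : Fin n), j ≠ j' → c (i, j) ≠ β j' := by
    intro i j j' h hc
    exact C.valid (hadj_V1P (show j ≠ j' from h)) hc.symm
  have hPP : ∀ (i i' j j' : Fin n), i ≠ i' → j ≠ j' → c (i, j) ≠ c (i', j') := by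
    intro i i' j j' h1 h2
    exact C.valid (hadj_PP h1 h2)
  have hdP : ∀ p, d ≠ c p := fun p => C.valid (hadj_dag p)
  have hR : ∀ (i j i' : Fin n), c (i, j) = α i' → i' = i := by
    intro i j i' h
    by_contra hne
    exact hL1a i j i' (fun e => hne e.symm) h
  have hS : ∀ (i j j' : Fin n), c (i, j) = β j' → j' = j := by
    intro i j j' h
    by_contra hne
    exact hL1b i j j' (fun e => hne e.symm) h
  let A : Finset κ := univ.image α
  let B : Finset κ := univ.image β
  let t : Finset (Fin n × Fin n) := univ.filter (fun p => α p.1 = β p.2)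
  have hA : A.card = n := by
    rw [Finset.card_image_of_injective _ hα_inj, Finset.card_univ, Fintype.card_fin]
  have hB : B.card = n := by
    rw [Finset.card_image_of_injective _ hβ_inj, Finset.card_univ, Fintype.card_fin]
  have hAB_le : (A ∩ B).card ≤ t.card := by
    apply Finset.card_le_card_of_surjOn (fun p => α p.1)
    intro x hx
    rw [Finset.coe_inter] at hx
    obtain ⟨hxA, hxB⟩ := hx
    simp only [A, B, Finset.coe_image, Set.mem_image, Finset.mem_coe, Finset.mem_univ] at hxA hxB
    obtain ⟨i, -, hi⟩ := hxA
    obtain ⟨j, -, hj⟩ := hxB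
    exact ⟨(i, j), by simp [t, hi, hj], hi⟩
  have hunion : 2 * n ≤ (A ∪ B).card + t.card := by
    have h1 := Finset.card_union_add_card_inter A B
    omega
  have hcardκ : Fintype.card κ = 2 * n - 1 := by simp [hκ]
  have hAUB_le : (A ∪ B).card ≤ 2 * n - 1 := by
    calc (A ∪ B).card ≤ (univ : Finset κ).card := Finset.card_le_card (Finset.subset_univ _)
    _ = 2 * n - 1 := by rw [Finset.card_univ, hcardκ]
  -- distinctness of elements of t
  have tdist : ∀ p ∈ t, ∀ q ∈ t, p ≠ q → p.1 ≠ q.1 ∧ p.2 ≠ q.2 := by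
    intro p hp q hq hne
    simp only [t, Finset.mem_filter] at hp hq
    constructor
    · intro h
      apply hne
      have : β p.2 = β q.2 := by rw [← hp.2, ← hq.2, h]
      exact Prod.ext h (hβ_inj this)
    · intro h
      apply hne
      have : α p.1 = α q.1 := by rw [hp.2, hq.2, h]
      exact Prod.ext (hα_inj this) h
  -- cross vertices avoid A ∪ B
  have hcross : ∀ p ∈ t, ∀ q ∈ t, p ≠ q → c (p.1, q.2) ∉ A ∪ B := by
    intro p hp q hq hne hmem
    obtain ⟨h1, h2⟩ := tdist p hp q hq hne
    simp only [t, Finset.mem_filter] at hp hq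
    rw [Finset.mem_union] at hmem
    rcases hmem with hmem | hmem
    · simp only [A, Finset.mem_image, Finset.mem_univ, true_and] at hmem
      obtain ⟨i', hi'⟩ := hmem
      have := hR _ _ _ hi'.symm
      rw [this] at hi'
      have : c (p.1, q.2) = β p.2 := by rw [← hi', hp.2]
      exact hL1b p.1 q.2 p.2 (fun e => h2 e.symm) this
    · simp only [B, Finset.mem_image, Finset.mem_univ, true_and] at hmem
      obtain ⟨j', hj'⟩ := hmem
      have := hS _ _ _ hj'.symm
      rw [this] at hj'
      have : c (p.1, q.2) = α q.1 := by rw [← hj', hq.2]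
      exact hL1a p.1 q.2 q.1 h1 this
  set k := t.card with hk
  rcases Nat.lt_or_ge k 2 with hk2 | hk2
  · interval_cases k
    · -- k = 0
      omega
    · -- k = 1
      obtain ⟨p₀, hp₀⟩ := Finset.card_eq_one.mp hk.symm
      have hp₀t : p₀ ∈ t := by rw [hp₀]; exact Finset.mem_singleton_self _
      simp only [t, Finset.mem_filter] at hp₀t
      have ht0 : α p₀.1 = β p₀.2 := hp₀t.2
      have hAUB : A ∪ B = (univ : Finset κ) := by
        apply Finset.eq_univ_of_card
        rw [hcardκ]
        omega
      have hmemall : ∀ x : κ, (∃ i, α i = x) ∨ (∃ j, β j = x) := by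
        intro x
        have : x ∈ A ∪ B := by rw [hAUB]; exact Finset.mem_univ x
        rw [Finset.mem_union] at this
        rcases this with h | h
        · left; simpa [A] using h
        · right; simpa [B] using h
      have key : ∀ i j, c (i, j) = α i ∨ c (i, j) = β j := by
        intro i j
        rcases hmemall (c (i, j)) with ⟨i', h⟩ | ⟨j', h⟩
        · left; rw [← h, hR i j i' h.symm]
        · right; rw [← h, hS i j j' h.symm]
      rcases hmemall d with ⟨i, hi⟩ | ⟨j, hj⟩
      · rcases key i p₀.2 with h | h
        · exact hdP (i, p₀.2) (by rw [h, hi])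
        · have hi0 : p₀.1 = i := hR i p₀.2 p₀.1 (by rw [h, ← ht0])
          exact hdP (i, p₀.2) (by rw [h, ← ht0, hi0, hi])
      · rcases key p₀.1 j with h | h
        · have hj0 : p₀.2 = j := hS p₀.1 j p₀.2 (by rw [h, ht0])
          exact hdP (p₀.1, j) (by rw [h, ht0, hj0, hj])
        · exact hdP (p₀.1, j) (by rw [h, hj])
  · -- k ≥ 2
    have hkpos : 0 < k := by omega
    let e : Fin k → t := (t.equivFin).symm
    have he_inj : Function.Injective e := (t.equivFin).symm.injective
    let σ : Fin k → Fin k := fun m => ⟨(m.val + 1) % k, Nat.mod_lt _ hkpos⟩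
    have hmod : ∀ a : ℕ, a < k → (a + 1) % k = if a + 1 = k then 0 else a + 1 := by
      intro a ha
      split
      · next h => rw [h, Nat.mod_self]
      · next h => exact Nat.mod_eq_of_lt (by omega)
    have hσ_ne : ∀ m, σ m ≠ m := by
      intro m h
      have hv := congrArg Fin.val h
      simp only [σ] at hv
      rw [hmod m.val m.isLt] at hv
      split at hv <;> omega
    have hσ_inj : Function.Injective σ := by
      intro a b h
      have hv := congrArg Fin.val h
      simp only [σ] at hv
      rw [hmod a.val a.isLt, hmod b.val b.isLt] at hv
      apply Fin.ext
      split at hv <;> split at hv <;> omega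
    have hediff : ∀ m m' : Fin k, m ≠ m' → ((e m : Fin n × Fin n)) ≠ (e m' : Fin n × Fin n) := by
      intro m m' hne hh
      exact hne (he_inj (Subtype.ext hh))
    let f : Fin k → Fin n × Fin n := fun m => ((e m : Fin n × Fin n).1, (e (σ m) : Fin n × Fin n).2)
    have hg_mem : ∀ m, c (f m) ∉ A ∪ B := by
      intro m
      exact hcross (e m : Fin n × Fin n) (e m).2 (e (σ m) : Fin n × Fin n) (e (σ m)).2
        (hediff m (σ m) (fun h => hσ_ne m h.symm))
    have hg_inj : ∀ m m' : Fin k, m ≠ m' → c (f m) ≠ c (f m') := by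
      intro m m' hne
      have h1 := (tdist (e m : Fin n × Fin n) (e m).2 (e m' : Fin n × Fin n) (e m').2
        (hediff m m' hne)).1
      have h2 := (tdist (e (σ m) : Fin n × Fin n) (e (σ m)).2 (e (σ m') : Fin n × Fin n)
        (e (σ m')).2 (hediff (σ m) (σ m') (fun h => hne (hσ_inj h)))).2
      exact hPP _ _ _ _ h1 h2
    have hcard : k ≤ ((univ : Finset κ) \ (A ∪ B)).card := by
      have := Finset.card_le_card_of_injOn (s := (univ : Finset (Fin k))) (t := (univ : Finset κ) \ (A ∪ B)) (fun m => c (f m))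
        (fun m _ => by
          rw [Finset.mem_coe, Finset.mem_sdiff]
          exact ⟨Finset.mem_univ _, hg_mem m⟩)
        (fun m _ m' _ h => by
          by_contra hne
          exact hg_inj m m' hne h)
      simpa using this
    rw [Finset.card_sdiff_of_subset (Finset.subset_univ _), Finset.card_univ, hcardκ] at hcard
    omega

/-- The chromatic number of `H_Δ` is exactly `2Δ - 2`. -/
theorem stmt_5 (Δ : ℕ) (hΔ : 2 < Δ) :
    (HGraph (Δ - 1)).chromaticNumber = ((2 * Δ - 2 : ℕ) : ℕ∞) := by
  set n := Δ - 1 with hn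
  have hn2 : 2 ≤ n := by omega
  have heq : 2 * Δ - 2 = 2 * n := by omega
  rw [heq]
  have hup : (HGraph n).chromaticNumber ≤ (2 * n : ℕ) :=
    (hcolorable (by omega)).chromaticNumber_le
  have hne_top : (HGraph n).chromaticNumber ≠ ⊤ :=
    (lt_of_le_of_lt hup (WithTop.coe_lt_top _)).ne
  set m := (HGraph n).chromaticNumber.toNat with hmdef
  have hm : (m : ℕ∞) = (HGraph n).chromaticNumber := ENat.coe_toNat hne_top
  rw [← hm] at hup ⊢
  have hup' : m ≤ 2 * n := by exact_mod_cast hup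
  have hlow : ¬ m ≤ 2 * n - 1 := by
    intro h
    apply hnotcolorable hn2
    apply SimpleGraph.Colorable.mono h
    apply SimpleGraph.chromaticNumber_le_iff_colorable.mp
    rw [← hm]
  have : m = 2 * n := by omega
  exact_mod_cast congrArg (Nat.cast : ℕ → ℕ∞) this
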